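/- Let (GU, b, μ) be a basic unramified PEL datum for an odd unitary similitude group over Q_p, and ψ a supercuspidal L-parameter of GU. Assuming (a) the averaging formula Mant_{GU,b,μ}(Σ_{π_{J_b}∈Π_ψ(J_b)} ⟨π_{J_b}, η(s)⟩ π_{J_b}) = Σ_ρ Σ_{π∈Π_ψ(GU)} ⟨π, η(s)⟩ (tr(η(s)|V_ρ)/dim ρ) [π][ρ ⊗ |·|^{−⟨ρ_{GU},μ⟩}] for every semisimple s ∈ S̄_ψ, and (b) that both sides depend only on the image of s in the finite group S̄_ψ, then for each fixed π_{J_b} ∈ Π_ψ(J_b): Mant_{GU,b,μ}(π_{J_b}) = Σ_{π∈Π_ψ(GU)} [π][Hom_{S̄_ψ}(ι(π_{J_b}) ⊗ ι(π)^∨, r_{−μ}∘ψ) ⊗ |·|^{−⟨ρ_{GU},μ⟩}] in Groth(GU(Q_p) × W_{E_μ}). -/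
import Mathlib

private lemma char_sum_eq_zero {S : Type*} [Group S] [Fintype S]
    (ψ : S →* ℂˣ) (h : ψ ≠ 1) : ∑ s : S, ((ψ s : ℂˣ) : ℂ) = 0 := by
  obtain ⟨t, ht⟩ : ∃ t, ψ t ≠ 1 := by
    by_contra hc
    push_neg at hc
    exact h (MonoidHom.ext fun s => hc s)
  have key : ((ψ t : ℂˣ) : ℂ) * ∑ s : S, ((ψ s : ℂˣ) : ℂ) = ∑ s : S, ((ψ s : ℂˣ) : ℂ) := by
    rw [Finset.mul_sum]
    refine Fintype.sum_equiv (Equiv.mulLeft t) _ _ fun s => ?_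
    simp [← Units.val_mul, ← map_mul]
  have ht' : ((ψ t : ℂˣ) : ℂ) ≠ 1 := fun hc => ht (Units.ext (by simpa using hc))
  have h0 := sub_eq_zero.mpr key
  rw [← sub_one_mul] at h0
  rcases mul_eq_zero.mp h0 with h1 | h2
  · exact absurd (sub_eq_zero.mp h1) ht'
  · exact h2



/-- Kottwitz conjecture from the averaging formula: Let `S = S̄_ψ`
be the (finite abelian) component group of a supercuspidal parameter, `PJ, PG`
the `L`-packets on `J_b` and `GU` with their characters `chJ, chG` of `S`
(injective on the packet by the LLC), `Rho` the set of irreducible factors `ρ`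
of `r_{−μ}∘ψ` with `S`-representations on the isotypic parts `Vρ` and
`dρ = dim ρ`.  Grothendieck groups are modelled by their coefficient functions
on the bases `[π_J]` resp. `[π]⊠[ρ ⊗ |·|^{−⟨ρ_GU,μ⟩}]`.  If the averaging
formula (a) holds for all `s` (and hence (b) both sides depend only on the image
of `s` in `S̄_ψ`), then for each `π_{J_b}`:
`Mant(π_{J_b}) = Σ_π [π][Hom_{S̄_ψ}(ι(π_{J_b}) ⊗ ι(π)^∨, r_{−μ}∘ψ) ⊗ |·|]`,
i.e. the coefficient at `(π, ρ)` is `dim Hom_{S̄_ψ}(chJ(π_J)·chG(π)⁻¹, Vρ)/dim ρ`. -/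
theorem kottwitz_conjecture_from_averaging
    (S : Type*) [CommGroup S] [Fintype S]
    (PJ PG Rho : Type*) [Fintype PJ] [Fintype PG] [DecidableEq PJ]
    (chJ : PJ → (S →* ℂˣ)) (chG : PG → (S →* ℂˣ))
    (hinj : Function.Injective chJ)
    (Vρ : Rho → Type*) [∀ r, AddCommGroup (Vρ r)] [∀ r, Module ℂ (Vρ r)]
    [∀ r, FiniteDimensional ℂ (Vρ r)]
    (σV : ∀ r, Representation ℂ S (Vρ r))
    (dρ : Rho → ℕ) (hdρ : ∀ r, 0 < dρ r)
    (Mant : (PJ → ℂ) →ₗ[ℂ] ((PG × Rho) → ℂ))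
    (havg : ∀ s : S,
      Mant (fun x => ((chJ x s : ℂˣ) : ℂ)) =
        fun q => ((chG q.1 s : ℂˣ) : ℂ) *
          (LinearMap.trace ℂ (Vρ q.2) (σV q.2 s) / (dρ q.2 : ℂ))) :
    ∀ (πJ : PJ) (q : PG × Rho) (W : Submodule ℂ (Vρ q.2)),
      (∀ v : Vρ q.2, v ∈ W ↔ ∀ s : S,
        σV q.2 s v = (((chJ πJ s : ℂˣ) : ℂ) * ((chG q.1 s : ℂˣ) : ℂ)⁻¹) • v) →
      Mant (fun x => if x = πJ then 1 else 0) q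
        = (Module.finrank ℂ W : ℂ) / (dρ q.2 : ℂ) := by
  intro πJ q W hW
  have hn0 : ((Fintype.card S : ℕ) : ℂ) ≠ 0 := Nat.cast_ne_zero.mpr Fintype.card_ne_zero
  set χ : S →* ℂˣ := chJ πJ * (chG q.1)⁻¹ with hχ
  have hχval : ∀ s, ((χ s : ℂˣ) : ℂ)
      = ((chJ πJ s : ℂˣ) : ℂ) * ((chG q.1 s : ℂˣ) : ℂ)⁻¹ := by
    intro s; simp [hχ]
  have hχval' : ∀ s, (((χ s)⁻¹ : ℂˣ) : ℂ)
      = (((chJ πJ s)⁻¹ : ℂˣ) : ℂ) * ((chG q.1 s : ℂˣ) : ℂ) := by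
    intro s; simp [hχ, mul_inv, mul_comm]
  -- the projector onto W
  set P : Vρ q.2 →ₗ[ℂ] Vρ q.2 :=
    ((Fintype.card S : ℕ) : ℂ)⁻¹ • ∑ s : S, (((χ s)⁻¹ : ℂˣ) : ℂ) • (σV q.2 s) with hP
  have hPmem : ∀ v, P v ∈ W := by
    intro v
    rw [hW]
    intro t
    rw [← hχval t]
    have hcomm : ∀ s : S, (σV q.2 t) ((σV q.2 s) v) = (σV q.2 (t * s)) v := fun s => by
      rw [map_mul]; rfl
    simp only [hP, LinearMap.smul_apply, LinearMap.sum_apply, map_smul, map_sum]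
    rw [smul_comm ((χ t : ℂˣ) : ℂ) (((Fintype.card S : ℕ) : ℂ)⁻¹)]
    congr 1
    rw [Finset.smul_sum]
    calc ∑ s : S, (((χ s)⁻¹ : ℂˣ) : ℂ) • (σV q.2 t) ((σV q.2 s) v)
        = ∑ s : S, (((χ (t⁻¹ * s))⁻¹ : ℂˣ) : ℂ) • (σV q.2 s) v := by
          rw [← Equiv.sum_comp (Equiv.mulLeft t)
            (fun s => (((χ (t⁻¹ * s))⁻¹ : ℂˣ) : ℂ) • (σV q.2 s) v)]
          refine Finset.sum_congr rfl fun s _ => ?_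
          simp only [Equiv.coe_mulLeft, inv_mul_cancel_left, hcomm]
      _ = ∑ s : S, ((χ t : ℂˣ) : ℂ) • (((χ s)⁻¹ : ℂˣ) : ℂ) • (σV q.2 s) v := by
          refine Finset.sum_congr rfl fun s _ => ?_
          rw [smul_smul]
          congr 1
          simp [map_mul, map_inv, mul_inv, mul_comm]
  have hPid : ∀ v ∈ W, P v = v := by
    intro v hv
    rw [hW] at hv
    have hterm : ∀ s : S, (((χ s)⁻¹ : ℂˣ) : ℂ) • (σV q.2 s) v = v := by
      intro s
      rw [hv s, ← hχval, smul_smul, ← Units.val_mul]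
      simp
    simp only [hP, LinearMap.smul_apply, LinearMap.sum_apply]
    rw [Finset.sum_congr rfl fun s _ => hterm s, Finset.sum_const, Finset.card_univ,
      ← Nat.cast_smul_eq_nsmul ℂ, smul_smul, inv_mul_cancel₀ hn0, one_smul]
  have hproj : LinearMap.IsProj W P := ⟨hPmem, hPid⟩
  have htr : LinearMap.trace ℂ (Vρ q.2) P = (Module.finrank ℂ W : ℂ) := hproj.trace
  have htrP : LinearMap.trace ℂ (Vρ q.2) P
      = ((Fintype.card S : ℕ) : ℂ)⁻¹ *
        ∑ s : S, (((χ s)⁻¹ : ℂˣ) : ℂ) * LinearMap.trace ℂ (Vρ q.2) (σV q.2 s) := by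
    simp [hP, map_smul, map_sum, smul_eq_mul]
  -- decompose the indicator function
  have hind : (fun x => if x = πJ then (1 : ℂ) else 0)
      = ((Fintype.card S : ℕ) : ℂ)⁻¹ •
        ∑ s : S, (((chJ πJ s)⁻¹ : ℂˣ) : ℂ) • (fun x => ((chJ x s : ℂˣ) : ℂ)) := by
    funext x
    simp only [Pi.smul_apply, Finset.sum_apply, smul_eq_mul]
    by_cases hx : x = πJ
    · subst hx
      rw [if_pos rfl]
      have h1 : ∑ s : S, (((chJ x s)⁻¹ : ℂˣ) : ℂ) * ((chJ x s : ℂˣ) : ℂ)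
          = ((Fintype.card S : ℕ) : ℂ) := by
        calc ∑ s : S, (((chJ x s)⁻¹ : ℂˣ) : ℂ) * ((chJ x s : ℂˣ) : ℂ)
            = ∑ _s : S, (1 : ℂ) := Finset.sum_congr rfl fun s _ => by
              rw [← Units.val_mul, inv_mul_cancel, Units.val_one]
          _ = ((Fintype.card S : ℕ) : ℂ) := by simp
      rw [h1, inv_mul_cancel₀ hn0]
    · rw [if_neg hx]
      have hne : chJ x * (chJ πJ)⁻¹ ≠ 1 := fun hc =>
        hx (hinj (mul_inv_eq_one.mp hc))
      have hzero := char_sum_eq_zero (chJ x * (chJ πJ)⁻¹) hne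
      have heq : ∑ s : S, (((chJ πJ s)⁻¹ : ℂˣ) : ℂ) * ((chJ x s : ℂˣ) : ℂ)
          = ∑ s : S, (((chJ x * (chJ πJ)⁻¹) s : ℂˣ) : ℂ) := by
        refine Finset.sum_congr rfl fun s _ => ?_
        simp [mul_comm]
      rw [heq, hzero, mul_zero]
  rw [hind, map_smul, map_sum, ← htr, htrP]
  simp only [Pi.smul_apply, Finset.sum_apply, LinearMap.map_smul, smul_eq_mul]
  rw [Finset.mul_sum, div_eq_mul_inv, Finset.mul_sum, Finset.sum_mul]
  refine Finset.sum_congr rfl fun s _ => ?_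
  simp only [havg]
  rw [hχval' s]
  ring
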